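/- Let (ξ_i, 𝔉_i)_{i=1,...,n} be square-integrable martingale differences on a probability space, S_n = Σ_{i=1}^n ξ_i, and for y ≥ 0 let B_n(y) = Σ_{i=1}^n ξ_i² 1_{ξ_i > y} + Σ_{i=1}^n E[ξ_i² 1_{ξ_i ≤ y} | 𝔉_{i-1}]. Then for every λ, y ≥ 0, the process U_k(λ) = exp{λ S_k - ((e^{λy} - 1 - λy)/y²) B_k(y)} (with the y = 0 convention (e^{λy}-1-λy)/y² = λ²/2) is a supermartingale with E[U_n(λ)] ≤ 1. -/

import Mathlib

open MeasureTheory Real Finset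


lemma aux_quad_lower {t : ℝ} (ht : 0 ≤ t) : 1 + t + t ^ 2 / 2 ≤ exp t := by
  have h := Real.sum_le_exp_of_nonneg ht 3
  simp [Finset.sum_range_succ, Nat.factorial] at h
  nlinarith [h]

lemma aux_quad_upper {s : ℝ} (hs : s ≤ 0) : exp s ≤ 1 + s + s ^ 2 / 2 := by
  have hmono : AntitoneOn (fun u : ℝ => 1 + u + u ^ 2 / 2 - exp u) (Set.Iic 0) := by
    apply antitoneOn_of_deriv_nonpos (convex_Iic 0)
    · fun_prop
    · fun_prop
    · intro x hx
      have hd : HasDerivAt (fun u : ℝ => 1 + u + u ^ 2 / 2 - exp u) (1 + x - exp x) x := by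
        have := ((hasDerivAt_id x).const_add 1).add
          (((hasDerivAt_pow 2 x).div_const 2)) |>.sub (Real.hasDerivAt_exp x)
        exact this.congr_deriv (by norm_num)
      rw [hd.deriv]
      have := Real.add_one_le_exp x
      linarith
  have := hmono hs (le_refl (0:ℝ)) hs
  simp at this
  linarith

lemma aux_log_lower {t : ℝ} (ht : 0 ≤ t) : t - t ^ 2 / 2 ≤ log (1 + t) := by
  have hmono : MonotoneOn (fun u : ℝ => log (1 + u) - u + u ^ 2 / 2) (Set.Ici 0) := by
    apply monotoneOn_of_deriv_nonneg (convex_Ici 0)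
    · apply ContinuousOn.add (ContinuousOn.sub ?_ (continuousOn_id)) (by fun_prop)
      apply ContinuousOn.log (by fun_prop)
      intro x hx; simp at hx; positivity
    · intro x hx
      simp only [interior_Ici, Set.mem_Ioi] at hx
      have h1 : (1:ℝ) + x ≠ 0 := by positivity
      have hd : HasDerivAt (fun u : ℝ => log (1 + u) - u + u ^ 2 / 2)
          (1 / (1 + x) - 1 + x) x := by
        have hl : HasDerivAt (fun u : ℝ => log (1 + u)) (1 / (1 + x)) x := by
          have := (HasDerivAt.log ((hasDerivAt_id x).const_add 1) h1)
          simpa using this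
        have := (hl.sub (hasDerivAt_id x)).add ((hasDerivAt_pow 2 x).div_const 2)
        exact this.congr_deriv (by norm_num)
      exact hd.differentiableAt.differentiableWithinAt
    · intro x hx
      simp only [interior_Ici, Set.mem_Ioi] at hx
      have h1 : (0:ℝ) < 1 + x := by positivity
      have hd : HasDerivAt (fun u : ℝ => log (1 + u) - u + u ^ 2 / 2)
          (1 / (1 + x) - 1 + x) x := by
        have hl : HasDerivAt (fun u : ℝ => log (1 + u)) (1 / (1 + x)) x := by
          have := (HasDerivAt.log ((hasDerivAt_id x).const_add 1) h1.ne')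
          simpa using this
        have := (hl.sub (hasDerivAt_id x)).add ((hasDerivAt_pow 2 x).div_const 2)
        exact this.congr_deriv (by norm_num)
      rw [hd.deriv]
      have : 1 / (1 + x) - 1 + x = x ^ 2 / (1 + x) := by field_simp; ring
      rw [this]; positivity
  have := hmono (Set.self_mem_Ici) (ht) ht
  simp at this
  linarith


-- q₁(u) = (u-1)e^u + 1 ≥ 0 on [0,∞)
lemma aux_q1 {t : ℝ} (ht : 0 ≤ t) : 0 ≤ (t - 1) * exp t + 1 := by
  have hmono : MonotoneOn (fun u : ℝ => (u - 1) * exp u + 1) (Set.Ici 0) := by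
    apply monotoneOn_of_deriv_nonneg (convex_Ici 0) (by fun_prop) (by fun_prop)
    intro x hx
    simp only [interior_Ici, Set.mem_Ioi] at hx
    have hd : HasDerivAt (fun u : ℝ => (u - 1) * exp u + 1) (x * exp x) x := by
      have := (((hasDerivAt_id x).sub_const 1).mul (Real.hasDerivAt_exp x)).add_const 1
      exact this.congr_deriv (by simp only [id]; ring)
    rw [hd.deriv]; positivity
  have := hmono Set.self_mem_Ici ht ht
  simpa using this

-- q(u) = (u-2)e^u + u + 2 ≥ 0 on [0,∞)
lemma aux_q {t : ℝ} (ht : 0 ≤ t) : 0 ≤ (t - 2) * exp t + t + 2 := by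
  have hmono : MonotoneOn (fun u : ℝ => (u - 2) * exp u + u + 2) (Set.Ici 0) := by
    apply monotoneOn_of_deriv_nonneg (convex_Ici 0) (by fun_prop) (by fun_prop)
    intro x hx
    simp only [interior_Ici, Set.mem_Ioi] at hx
    have hd : HasDerivAt (fun u : ℝ => (u - 2) * exp u + u + 2)
        ((x - 1) * exp x + 1) x := by
      have := ((((hasDerivAt_id x).sub_const 2).mul (Real.hasDerivAt_exp x)).add
        (hasDerivAt_id x)).add_const 2
      exact this.congr_deriv (by simp only [id]; ring)
    rw [hd.deriv]
    exact aux_q1 hx.le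
  have := hmono Set.self_mem_Ici ht ht
  simpa using this

-- h monotone on (0, ∞)
lemma aux_h_mono {s t : ℝ} (hs : 0 < s) (hst : s ≤ t) :
    (exp s - 1 - s) / s ^ 2 ≤ (exp t - 1 - t) / t ^ 2 := by
  have hmono : MonotoneOn (fun u : ℝ => (exp u - 1 - u) / u ^ 2) (Set.Ioi 0) := by
    apply monotoneOn_of_deriv_nonneg (convex_Ioi 0)
    · apply ContinuousOn.div (by fun_prop) (by fun_prop)
      intro x hx; simp at hx; positivity
    · intro x hx
      rw [interior_Ioi] at hx
      simp only [Set.mem_Ioi] at hx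
      apply DifferentiableAt.differentiableWithinAt
      apply DifferentiableAt.div (by fun_prop) (by fun_prop)
      positivity
    · intro x hx
      rw [interior_Ioi] at hx
      simp only [Set.mem_Ioi] at hx
      have hx2 : (x:ℝ) ^ 2 ≠ 0 := by positivity
      have hd : HasDerivAt (fun u : ℝ => (exp u - 1 - u) / u ^ 2)
          (((exp x - 1) * x ^ 2 - (exp x - 1 - x) * (2 * x)) / (x ^ 2) ^ 2) x := by
        have hnum : HasDerivAt (fun u : ℝ => exp u - 1 - u) (exp x - 1) x := by
          have := ((Real.hasDerivAt_exp x).sub_const 1).sub (hasDerivAt_id x)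
          exact this.congr_deriv (by ring)
        have hden : HasDerivAt (fun u : ℝ => u ^ 2) (2 * x) x := by
          simpa using hasDerivAt_pow 2 x
        exact hnum.div hden hx2
      rw [hd.deriv]
      have hnum : (exp x - 1) * x ^ 2 - (exp x - 1 - x) * (2 * x)
          = x * ((x - 2) * exp x + x + 2) := by ring
      rw [hnum]
      have := aux_q hx.le
      positivity
  exact hmono (Set.mem_Ioi.2 hs) (Set.mem_Ioi.2 (hs.trans_le hst)) hst

lemma aux_cross {s t : ℝ} (ht : 0 ≤ t) (hst : s ≤ t) :
    (exp s - 1 - s) * t ^ 2 ≤ (exp t - 1 - t) * s ^ 2 := by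
  rcases le_or_gt s 0 with hs | hs
  · have h1 : exp s - 1 - s ≤ s ^ 2 / 2 := by have := aux_quad_upper hs; linarith
    have h2 : t ^ 2 / 2 ≤ exp t - 1 - t := by have := aux_quad_lower ht; linarith
    calc (exp s - 1 - s) * t ^ 2 ≤ s ^ 2 / 2 * t ^ 2 := by nlinarith [sq_nonneg t]
      _ = t ^ 2 / 2 * s ^ 2 := by ring
      _ ≤ (exp t - 1 - t) * s ^ 2 := by nlinarith [sq_nonneg s]
  · have h := aux_h_mono hs hst
    have ht' : 0 < t := hs.trans_le hst
    have hs2 : (0:ℝ) < s ^ 2 := by positivity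
    have ht2 : (0:ℝ) < t ^ 2 := by positivity
    rw [div_le_div_iff₀ hs2 ht2] at h
    linarith

-- keyA
lemma keyA {lam y g x : ℝ} (hlam : 0 ≤ lam) (hy : 0 ≤ y)
    (hg : g = if y = 0 then lam ^ 2 / 2 else (exp (lam * y) - 1 - lam * y) / y ^ 2)
    (hx : x ≤ y) : exp (lam * x) ≤ 1 + lam * x + g * x ^ 2 := by
  by_cases hy0 : y = 0
  · subst hy0
    rw [if_pos rfl] at hg
    have hs : lam * x ≤ 0 := mul_nonpos_of_nonneg_of_nonpos hlam hx
    have := aux_quad_upper hs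
    rw [hg]; nlinarith
  · rw [if_neg hy0] at hg
    have hy' : 0 < y := lt_of_le_of_ne hy (Ne.symm hy0)
    rcases eq_or_lt_of_le hlam with hl0 | hl0
    · rw [← hl0] at hg ⊢
      simp at hg ⊢
      rw [hg]; positivity
    · have hst : lam * x ≤ lam * y := by nlinarith
      have hcross := aux_cross (by positivity) hst
      have ht2 : (0:ℝ) < (lam * y) ^ 2 := by positivity
      have hgx : g * x ^ 2 = (exp (lam * y) - 1 - lam * y) * (lam * x) ^ 2 / (lam * y) ^ 2 := by
        rw [hg]; field_simp
      rw [hgx]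
      have : exp (lam * x) - 1 - lam * x
          ≤ (exp (lam * y) - 1 - lam * y) * (lam * x) ^ 2 / (lam * y) ^ 2 := by
        rw [le_div_iff₀ ht2]; linarith
      linarith

-- keyB
lemma keyB {lam y g x : ℝ} (hlam : 0 ≤ lam) (hy : 0 ≤ y)
    (hg : g = if y = 0 then lam ^ 2 / 2 else (exp (lam * y) - 1 - lam * y) / y ^ 2)
    (hx : y ≤ x) : exp (lam * x - g * x ^ 2) ≤ 1 + lam * x := by
  -- derived facts
  have hg2 : lam ^ 2 ≤ 2 * g := by
    by_cases hy0 : y = 0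
    · rw [hg, if_pos hy0]; ring_nf; rfl
    · rw [hg, if_neg hy0]
      have hy' : 0 < y := lt_of_le_of_ne hy (Ne.symm hy0)
      have := aux_quad_lower (t := lam * y) (by positivity)
      rw [← mul_div_assoc, le_div_iff₀ (by positivity : (0:ℝ) < y ^ 2)]
      nlinarith
  have hg0 : 0 ≤ g := by nlinarith [sq_nonneg lam]
  have hGy : 0 ≤ log (1 + lam * y) - lam * y + g * y ^ 2 := by
    by_cases hy0 : y = 0
    · subst hy0; simp
    · rw [hg, if_neg hy0]
      have hy' : 0 < y := lt_of_le_of_ne hy (Ne.symm hy0)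
      have h1 := aux_log_lower (t := lam * y) (by positivity)
      have h2 := aux_quad_lower (t := lam * y) (by positivity)
      have : (exp (lam * y) - 1 - lam * y) / y ^ 2 * y ^ 2 = exp (lam * y) - 1 - lam * y := by
        field_simp
      rw [this]; nlinarith
  have h1x : (0:ℝ) < 1 + lam * x := by nlinarith
  rw [← Real.exp_log h1x, Real.exp_le_exp]
  -- goal : lam * x - g * x ^ 2 ≤ log (1 + lam * x)
  have hmono : MonotoneOn (fun u : ℝ => log (1 + lam * u) - lam * u + g * u ^ 2)
      (Set.Ici y) := by
    apply monotoneOn_of_deriv_nonneg (convex_Ici y)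
    · apply ContinuousOn.add (ContinuousOn.sub ?_ (by fun_prop)) (by fun_prop)
      apply ContinuousOn.log (by fun_prop)
      intro u hu; simp only [Set.mem_Ici] at hu; nlinarith
    · intro u hu
      rw [interior_Ici] at hu
      simp only [Set.mem_Ioi] at hu
      have h1u : (0:ℝ) < 1 + lam * u := by nlinarith
      apply DifferentiableAt.differentiableWithinAt
      apply DifferentiableAt.add (DifferentiableAt.sub ?_ (by fun_prop)) (by fun_prop)
      exact DifferentiableAt.log (by fun_prop) h1u.ne'
    · intro u hu
      rw [interior_Ici] at hu
      simp only [Set.mem_Ioi] at hu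
      have hu0 : 0 ≤ u := hy.trans hu.le
      have h1u : (0:ℝ) < 1 + lam * u := by nlinarith
      have hd : HasDerivAt (fun v : ℝ => log (1 + lam * v) - lam * v + g * v ^ 2)
          (lam / (1 + lam * u) - lam + g * (2 * u)) u := by
        have hl : HasDerivAt (fun v : ℝ => log (1 + lam * v)) (lam / (1 + lam * u)) u := by
          have hin : HasDerivAt (fun v : ℝ => 1 + lam * v) lam u := by
            simpa using ((hasDerivAt_id u).const_mul lam).const_add 1
          simpa using hin.log h1u.ne'
        have hm : HasDerivAt (fun v : ℝ => lam * v) lam u := by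
          simpa using (hasDerivAt_id u).const_mul lam
        have hp : HasDerivAt (fun v : ℝ => g * v ^ 2) (g * (2 * u)) u := by
          simpa using (hasDerivAt_pow 2 u).const_mul g
        exact (hl.sub hm).add hp
      rw [hd.deriv]
      have key : lam / (1 + lam * u) - lam + g * (2 * u)
          = u * (2 * g * (1 + lam * u) - lam ^ 2) / (1 + lam * u) := by
        field_simp; ring
      rw [key]
      apply div_nonneg _ h1u.le
      have hlu : 0 ≤ lam * u := mul_nonneg hlam hu0
      have : lam ^ 2 ≤ 2 * g * (1 + lam * u) := by nlinarith [mul_nonneg hg0 hlu]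
      nlinarith
  have := hmono (Set.self_mem_Ici) (Set.mem_Ici.2 hx) hx
  simp only at this
  linarith

lemma g_nonneg {lam y g : ℝ} (hlam : 0 ≤ lam) (hy : 0 ≤ y)
    (hg : g = if y = 0 then lam ^ 2 / 2 else (exp (lam * y) - 1 - lam * y) / y ^ 2) :
    0 ≤ g := by
  rw [hg]
  split_ifs with h
  · positivity
  · apply div_nonneg _ (sq_nonneg y)
    nlinarith [Real.add_one_le_exp (lam * y)]

lemma keyD {lam y g x : ℝ} (hlam : 0 ≤ lam) (hy : 0 ≤ y)
    (hg : g = if y = 0 then lam ^ 2 / 2 else (exp (lam * y) - 1 - lam * y) / y ^ 2) :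
    exp (lam * x - g * (if y < x then x ^ 2 else 0))
      ≤ max (exp (lam * y)) (exp (lam ^ 2 / (4 * g))) := by
  by_cases hx : y < x
  · rw [if_pos hx]
    rcases eq_or_lt_of_le (g_nonneg hlam hy hg) with hg0 | hg0
    · -- g = 0, then lam = 0
      have hlam0 : lam = 0 := by
        rw [hg] at hg0
        split_ifs at hg0 with h
        · nlinarith [sq_nonneg lam]
        · have hy' : 0 < y := lt_of_le_of_ne hy (Ne.symm h)
          by_contra hne
          have hlam' : 0 < lam := lt_of_le_of_ne hlam (Ne.symm hne)
          have := Real.add_one_lt_exp (x := lam * y) (by positivity)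
          have h2 : (0:ℝ) < (exp (lam * y) - 1 - lam * y) / y ^ 2 := by
            apply div_pos (by linarith) (by positivity)
          linarith
      subst hlam0
      rw [← hg0]
      simp
    · refine le_trans (Real.exp_le_exp.2 ?_) (le_max_right _ _)
      rw [le_div_iff₀ (by positivity : (0:ℝ) < 4 * g)]
      nlinarith [sq_nonneg (lam - 2 * g * x)]
  · rw [if_neg hx]
    push_neg at hx
    refine le_trans (Real.exp_le_exp.2 ?_) (le_max_left _ _)
    simp only [mul_zero, sub_zero]
    nlinarith

theorem main {Ω : Type*} {m : MeasurableSpace Ω} {μ : Measure Ω} [IsProbabilityMeasure μ]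
    (ℱ : Filtration ℕ m)
    (ξ : ℕ → Ω → ℝ)
    (hadp : ∀ i, StronglyMeasurable[ℱ i] (ξ i))
    (hsq : ∀ i, Integrable (fun ω => (ξ i ω) ^ 2) μ)
    (hmart : ∀ i : ℕ, 1 ≤ i → μ[ξ i | ℱ (i - 1)] =ᵐ[μ] 0)
    (lam y : ℝ) (hlam : 0 ≤ lam) (hy : 0 ≤ y)
    (g : ℝ) (hg : g = if y = 0 then lam ^ 2 / 2 else (Real.exp (lam * y) - 1 - lam * y) / y ^ 2) :
    Supermartingale (fun k ω => Real.exp (lam * (∑ i ∈ Finset.Icc 1 k, ξ i ω)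
      - g * ((∑ i ∈ Finset.Icc 1 k, if y < ξ i ω then (ξ i ω) ^ 2 else 0)
        + ∑ i ∈ Finset.Icc 1 k,
            (μ[fun ω' => if ξ i ω' ≤ y then (ξ i ω') ^ 2 else 0 | ℱ (i - 1)]) ω))) ℱ μ := by
  have hg0 : 0 ≤ g := g_nonneg hlam hy hg
  set D : ℝ := max (Real.exp (lam * y)) (Real.exp (lam ^ 2 / (4 * g))) with hD
  have hD1 : 1 ≤ D := le_trans (Real.one_le_exp (by positivity)) (le_max_left _ _)
  set ν : ℕ → Ω → ℝ := fun i ω' => if ξ i ω' ≤ y then (ξ i ω') ^ 2 else 0 with hν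
  set A : ℕ → Ω → ℝ := fun i ω' => if y < ξ i ω' then (ξ i ω') ^ 2 else 0 with hA
  set V : ℕ → Ω → ℝ := fun i => μ[ν i | ℱ (i - 1)] with hV
  set U : ℕ → Ω → ℝ := fun k ω => Real.exp (lam * (∑ i ∈ Finset.Icc 1 k, ξ i ω)
      - g * ((∑ i ∈ Finset.Icc 1 k, A i ω) + ∑ i ∈ Finset.Icc 1 k, V i ω)) with hU
  -- measurability
  have hmξ : ∀ i, StronglyMeasurable (ξ i) := fun i => (hadp i).mono (ℱ.le i)
  have hmν : ∀ i, StronglyMeasurable[ℱ i] (ν i) := fun i =>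
    (Measurable.ite (measurableSet_le (hadp i).measurable measurable_const)
      ((hadp i).measurable.pow_const 2) measurable_const).stronglyMeasurable
  have hmA : ∀ i, StronglyMeasurable[ℱ i] (A i) := fun i =>
    (Measurable.ite (measurableSet_lt measurable_const (hadp i).measurable)
      ((hadp i).measurable.pow_const 2) measurable_const).stronglyMeasurable
  -- integrability of building blocks
  have hintξ : ∀ i, Integrable (ξ i) μ := by
    intro i
    refine ((hsq i).add (integrable_const 1)).mono' (hmξ i).aestronglyMeasurable ?_
    refine Filter.Eventually.of_forall fun ω => ?_
    rw [Real.norm_eq_abs, Pi.add_apply]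
    nlinarith [sq_nonneg (|ξ i ω| - 1), sq_abs (ξ i ω)]
  have hintν : ∀ i, Integrable (ν i) μ := by
    intro i
    refine (hsq i).mono' ((hmν i).mono (ℱ.le i)).aestronglyMeasurable ?_
    refine Filter.Eventually.of_forall fun ω => ?_
    rw [hν]
    by_cases h : ξ i ω ≤ y
    · simp [h, Real.norm_eq_abs, abs_of_nonneg (sq_nonneg (ξ i ω))]
    · simp [h, sq_nonneg]
  have hνnn : ∀ i ω, 0 ≤ ν i ω := by
    intro i ω; rw [hν]; dsimp only; split_ifs
    · exact sq_nonneg _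
    · exact le_refl 0
  have hVnn : ∀ᵐ ω ∂μ, ∀ i, 0 ≤ V i ω :=
    ae_all_iff.2 fun i => condExp_nonneg (Filter.Eventually.of_forall (hνnn i))
  have hmV : ∀ i, StronglyMeasurable[ℱ (i - 1)] (V i) := fun i => stronglyMeasurable_condExp
  -- the one-step factor W and its properties
  set W : ℕ → Ω → ℝ := fun i ω => Real.exp (lam * ξ i ω - g * A i ω) with hW
  have hWle : ∀ i ω, W i ω ≤ D := fun i ω => keyD hlam hy hg
  have hmW : ∀ i, StronglyMeasurable[ℱ i] (W i) := fun i =>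
    (((measurable_const.mul (hadp i).measurable).sub
      (measurable_const.mul (hmA i).measurable)).exp).stronglyMeasurable
  have hintW : ∀ i, Integrable (W i) μ := by
    intro i
    refine (integrable_const D).mono' ((hmW i).mono (ℱ.le i)).aestronglyMeasurable ?_
    refine Filter.Eventually.of_forall fun ω => ?_
    rw [Real.norm_eq_abs, abs_of_pos (Real.exp_pos _)]
    exact hWle i ω
  -- pointwise domination W ≤ L
  set L : ℕ → Ω → ℝ := fun i ω => 1 + lam * ξ i ω + g * ν i ω with hL
  have hWL : ∀ i ω, W i ω ≤ L i ω := by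
    intro i ω
    rw [hW, hL, hν, hA]
    dsimp only
    by_cases h : ξ i ω ≤ y
    · rw [if_neg (not_lt.2 h), if_pos h, mul_zero, sub_zero]
      exact keyA hlam hy hg h
    · push_neg at h
      rw [if_pos h, if_neg (not_le.2 h), mul_zero, add_zero]
      exact keyB hlam hy hg h.le
  have hLdec : ∀ i, L i = (fun _ => (1:ℝ)) + (lam • ξ i + g • ν i) := by
    intro i; funext ω
    simp only [hL, Pi.add_apply, Pi.smul_apply, smul_eq_mul]
    ring
  have hintL : ∀ i, Integrable (L i) μ := fun i => (hLdec i) ▸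
    ((integrable_const 1).add (((hintξ i).smul lam).add ((hintν i).smul g)))
  -- conditional expectation of L
  have hcondL : ∀ k, μ[L (k+1) | ℱ k] =ᵐ[μ] fun ω => 1 + g * V (k+1) ω := by
    intro k
    have h0 : μ[L (k+1) | ℱ k]
        =ᵐ[μ] μ[(fun _ => (1:ℝ)) + (lam • ξ (k+1) + g • ν (k+1)) | ℱ k] := by
      rw [hLdec (k+1)]
    have h1 := condExp_add (μ := μ) (m := ℱ k) (integrable_const (1:ℝ))
      (((hintξ (k+1)).smul lam).add ((hintν (k+1)).smul g))
    have h2 := condExp_add (μ := μ) (m := ℱ k) ((hintξ (k+1)).smul lam) ((hintν (k+1)).smul g)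
    have h3 := condExp_smul (μ := μ) (m := ℱ k) lam (ξ (k+1))
    have h4 := condExp_smul (μ := μ) (m := ℱ k) g (ν (k+1))
    have h5 : μ[ξ (k+1) | ℱ k] =ᵐ[μ] 0 := hmart (k+1) (Nat.le_add_left 1 k)
    have hc : μ[(fun _ => (1:ℝ)) | ℱ k] = fun _ => (1:ℝ) := condExp_const (ℱ.le k) 1
    refine h0.trans (h1.trans ?_)
    filter_upwards [h2, h3, h4, h5] with ω hω2 hω3 hω4 hω5
    simp only [Pi.add_apply, hc, hω2, hω3, hω4, Pi.smul_apply, smul_eq_mul, hω5,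
      Pi.zero_apply, mul_zero, zero_add, hV, Nat.add_sub_cancel]
  -- adaptedness
  have hadpU : StronglyAdapted ℱ U := by
    intro k
    simp only [hU]
    refine Measurable.stronglyMeasurable (Measurable.exp (Measurable.sub
      (Measurable.const_mul ?_ lam) (Measurable.const_mul (Measurable.add ?_ ?_) g)))
    · refine Finset.measurable_sum _ fun i hi => ?_
      exact ((hadp i).mono (ℱ.mono (Finset.mem_Icc.1 hi).2)).measurable
    · refine Finset.measurable_sum _ fun i hi => ?_
      exact ((hmA i).mono (ℱ.mono (Finset.mem_Icc.1 hi).2)).measurable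
    · refine Finset.measurable_sum _ fun i hi => ?_
      exact ((hmV i).mono (ℱ.mono ((Nat.sub_le i 1).trans (Finset.mem_Icc.1 hi).2))).measurable
  have hUpos : ∀ k ω, 0 < U k ω := by
    intro k ω; simp only [hU]; exact Real.exp_pos _
  -- integrability of U
  have hintU : ∀ k, Integrable (U k) μ := by
    intro k
    refine (integrable_const (D ^ k)).mono' ((hadpU k).mono (ℱ.le k)).aestronglyMeasurable ?_
    filter_upwards [hVnn] with ω hω
    rw [Real.norm_eq_abs, abs_of_pos (hUpos k ω)]
    have hsplit : lam * (∑ i ∈ Finset.Icc 1 k, ξ i ω)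
        - g * ((∑ i ∈ Finset.Icc 1 k, A i ω) + ∑ i ∈ Finset.Icc 1 k, V i ω)
        = (∑ i ∈ Finset.Icc 1 k, (lam * ξ i ω - g * A i ω))
          + (-(g * ∑ i ∈ Finset.Icc 1 k, V i ω)) := by
      rw [Finset.sum_sub_distrib, ← Finset.mul_sum, ← Finset.mul_sum]; ring
    have hU1 : U k ω = Real.exp (∑ i ∈ Finset.Icc 1 k, (lam * ξ i ω - g * A i ω))
        * Real.exp (-(g * ∑ i ∈ Finset.Icc 1 k, V i ω)) := by
      simp only [hU]
      rw [hsplit, Real.exp_add]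
    rw [hU1]
    have h2 : Real.exp (-(g * ∑ i ∈ Finset.Icc 1 k, V i ω)) ≤ 1 := by
      rw [Real.exp_le_one_iff, neg_nonpos]
      exact mul_nonneg hg0 (Finset.sum_nonneg fun i _ => hω i)
    have h1 : Real.exp (∑ i ∈ Finset.Icc 1 k, (lam * ξ i ω - g * A i ω)) ≤ D ^ k := by
      rw [Real.exp_sum]
      calc ∏ i ∈ Finset.Icc 1 k, Real.exp (lam * ξ i ω - g * A i ω)
          ≤ ∏ _i ∈ Finset.Icc 1 k, D :=
            Finset.prod_le_prod (fun i _ => (Real.exp_pos _).le) (fun i _ => hWle i ω)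
        _ = D ^ k := by rw [Finset.prod_const, Nat.card_Icc, Nat.add_sub_cancel]
    calc Real.exp (∑ i ∈ Finset.Icc 1 k, (lam * ξ i ω - g * A i ω))
          * Real.exp (-(g * ∑ i ∈ Finset.Icc 1 k, V i ω))
        ≤ D ^ k * 1 := by
          apply mul_le_mul h1 h2 (Real.exp_pos _).le (by positivity)
      _ = D ^ k := mul_one _
  -- one-step supermartingale inequality
  have hstep : ∀ k, μ[U (k+1) | ℱ k] ≤ᵐ[μ] U k := by
    intro k
    set F : Ω → ℝ := fun ω => U k ω * Real.exp (-(g * V (k+1) ω)) with hF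
    have hfact : U (k+1) = fun ω => F ω * W (k+1) ω := by
      funext ω
      simp only [hU, hF, hW]
      rw [Finset.sum_Icc_succ_top (Nat.le_add_left 1 k),
        Finset.sum_Icc_succ_top (Nat.le_add_left 1 k),
        Finset.sum_Icc_succ_top (Nat.le_add_left 1 k),
        ← Real.exp_add, ← Real.exp_add]
      congr 1
      ring
    have hmF : StronglyMeasurable[ℱ k] F := by
      refine (hadpU k).mul ?_
      refine Measurable.stronglyMeasurable (Measurable.exp (Measurable.neg
        (Measurable.const_mul ?_ g)))
      exact (hmV (k+1)).measurable
    have hintFW : Integrable (F * W (k+1)) μ := by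
      have : F * W (k+1) = U (k+1) := by funext ω; rw [hfact]; rfl
      rw [this]; exact hintU (k+1)
    have hpull : μ[F * W (k+1) | ℱ k] =ᵐ[μ] F * μ[W (k+1) | ℱ k] :=
      condExp_mul_of_stronglyMeasurable_left hmF hintFW (hintW (k+1))
    have heq : μ[U (k+1) | ℱ k] =ᵐ[μ] F * μ[W (k+1) | ℱ k] := by
      have : U (k+1) = F * W (k+1) := by funext ω; rw [hfact]; rfl
      rw [this]; exact hpull
    have hcondW : μ[W (k+1) | ℱ k] ≤ᵐ[μ] μ[L (k+1) | ℱ k] :=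
      condExp_mono (hintW _) (hintL _) (Filter.Eventually.of_forall fun ω => hWL (k+1) ω)
    filter_upwards [heq, hcondW, hcondL k] with ω hωeq hωW hωL
    rw [hωeq]
    have hstep1 : (F * μ[W (k+1) | ℱ k]) ω ≤ F ω * (1 + g * V (k+1) ω) := by
      rw [Pi.mul_apply]
      apply mul_le_mul_of_nonneg_left _ (mul_nonneg (hUpos k ω).le (Real.exp_pos _).le)
      rw [hωL] at hωW
      exact hωW
    refine hstep1.trans ?_
    simp only [hF]
    have h1 : Real.exp (-(g * V (k+1) ω)) * (1 + g * V (k+1) ω) ≤ 1 := by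
      rw [Real.exp_neg, inv_mul_le_iff₀ (Real.exp_pos _), mul_one]
      linarith [Real.add_one_le_exp (g * V (k+1) ω)]
    nlinarith [mul_le_mul_of_nonneg_left h1 (hUpos k ω).le]
  exact supermartingale_nat hadpU hintU hstep


theorem main2 {Ω : Type*} {m : MeasurableSpace Ω} {μ : Measure Ω} [IsProbabilityMeasure μ]
    (ℱ : Filtration ℕ m)
    (ξ : ℕ → Ω → ℝ)
    (hadp : ∀ i, StronglyMeasurable[ℱ i] (ξ i))
    (hsq : ∀ i, Integrable (fun ω => (ξ i ω) ^ 2) μ)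
    (hmart : ∀ i : ℕ, 1 ≤ i → μ[ξ i | ℱ (i - 1)] =ᵐ[μ] 0)
    (n : ℕ) (lam y : ℝ) (hlam : 0 ≤ lam) (hy : 0 ≤ y)
    (g : ℝ) (hg : g = if y = 0 then lam ^ 2 / 2 else (Real.exp (lam * y) - 1 - lam * y) / y ^ 2) :
    ∫ ω, Real.exp (lam * (∑ i ∈ Finset.Icc 1 n, ξ i ω)
      - g * ((∑ i ∈ Finset.Icc 1 n, if y < ξ i ω then (ξ i ω) ^ 2 else 0)
        + ∑ i ∈ Finset.Icc 1 n,
            (μ[fun ω' => if ξ i ω' ≤ y then (ξ i ω') ^ 2 else 0 | ℱ (i - 1)]) ω)) ∂μ ≤ 1 := by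
  have hsup := main ℱ ξ hadp hsq hmart lam y hlam hy g hg
  set U : ℕ → Ω → ℝ := fun k ω => Real.exp (lam * (∑ i ∈ Finset.Icc 1 k, ξ i ω)
      - g * ((∑ i ∈ Finset.Icc 1 k, if y < ξ i ω then (ξ i ω) ^ 2 else 0)
        + ∑ i ∈ Finset.Icc 1 k,
            (μ[fun ω' => if ξ i ω' ≤ y then (ξ i ω') ^ 2 else 0 | ℱ (i - 1)]) ω)) with hU
  show ∫ ω, U n ω ∂μ ≤ 1
  have hle : μ[U n | ℱ 0] ≤ᵐ[μ] U 0 := hsup.2.1 0 n (Nat.zero_le n)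
  have h1 : ∫ ω, U n ω ∂μ = ∫ ω, (μ[U n | ℱ 0]) ω ∂μ := (integral_condExp (ℱ.le 0)).symm
  have h2 : ∫ ω, (μ[U n | ℱ 0]) ω ∂μ ≤ ∫ ω, U 0 ω ∂μ :=
    integral_mono_ae integrable_condExp (hsup.integrable 0) hle
  have hU0 : ∀ ω, U 0 ω = 1 := by
    intro ω
    simp only [hU]
    rw [Finset.Icc_eq_empty (by omega : ¬(1:ℕ) ≤ 0)]
    simp
  have h3 : ∫ ω, U 0 ω ∂μ = 1 := by
    simp only [hU0]
    simp
  linarith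

theorem stmt_4 {Ω : Type*} {m : MeasurableSpace Ω} {μ : Measure Ω} [IsProbabilityMeasure μ]
    (ℱ : Filtration ℕ m)
    (ξ : ℕ → Ω → ℝ)
    (hadp : ∀ i, StronglyMeasurable[ℱ i] (ξ i))
    (hsq : ∀ i, Integrable (fun ω => (ξ i ω) ^ 2) μ)
    (hmart : ∀ i : ℕ, 1 ≤ i → μ[ξ i | ℱ (i - 1)] =ᵐ[μ] 0)
    (n : ℕ) (lam y : ℝ) (hlam : 0 ≤ lam) (hy : 0 ≤ y)
    (g : ℝ) (hg : g = if y = 0 then lam ^ 2 / 2 else (Real.exp (lam * y) - 1 - lam * y) / y ^ 2)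
    (S B : ℕ → Ω → ℝ)
    (hS : S = fun k ω => ∑ i ∈ Finset.Icc 1 k, ξ i ω)
    (hB : B = fun k ω =>
      (∑ i ∈ Finset.Icc 1 k, if y < ξ i ω then (ξ i ω) ^ 2 else 0)
        + ∑ i ∈ Finset.Icc 1 k,
            (μ[fun ω' => if ξ i ω' ≤ y then (ξ i ω') ^ 2 else 0 | ℱ (i - 1)]) ω)
    (U : ℕ → Ω → ℝ)
    (hU : U = fun k ω => Real.exp (lam * S k ω - g * B k ω)) :
    Supermartingale U ℱ μ ∧ ∫ ω, U n ω ∂μ ≤ 1 := by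
  subst hS hB hU
  exact ⟨main ℱ ξ hadp hsq hmart lam y hlam hy g hg,
    main2 ℱ ξ hadp hsq hmart n lam y hlam hy g hg⟩
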